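/- Let ε, δ ∈ (0,1) and let Q ∈ ℝ^{m×d} be a random matrix with the Strong (ε,δ)-JL Moment Property. Then for every integer ℓ ≥ 1, both I_ℓ ⊗ Q ∈ ℝ^{ℓm×ℓd} and Q ⊗ I_ℓ ∈ ℝ^{ℓm×ℓd} have the Strong (ε,δ)-JL Moment Property, where I_ℓ is the ℓ×ℓ identity matrix. -/

import Mathlib

open MeasureTheory ProbabilityTheory Real
open scoped ENNReal NNReal

noncomputable section

instance matrixMeasurableSpace {ι κ : Type*} : MeasurableSpace (Matrix ι κ ℝ) :=
  MeasurableSpace.pi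

/-- `‖X‖_p = (𝔼 |X|^p)^(1/p)`, the `p`-th moment norm of a real random variable. -/
def pmom {Ω : Type*} [MeasureSpace Ω] (p : ℝ) (X : Ω → ℝ) : ℝ :=
  (∫ ω, |X ω| ^ p) ^ (1 / p)

/-- Squared Euclidean norm `‖x‖₂²` of a finitely supported real vector. -/
def sqNorm {ι : Type*} [Fintype ι] (x : ι → ℝ) : ℝ := ∑ i, x i ^ 2

/-- Euclidean norm `‖x‖₂`. -/
def l2norm {ι : Type*} [Fintype ι] (x : ι → ℝ) : ℝ := Real.sqrt (sqNorm x)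

/-- Frobenius norm of a matrix. -/
def frobNorm {ι κ : Type*} [Fintype ι] [Fintype κ] (A : Matrix ι κ ℝ) : ℝ :=
  Real.sqrt (∑ i, ∑ j, A i j ^ 2)

/-- Operator (spectral) norm of a matrix. -/
def opNorm {ι κ : Type*} [Fintype ι] [Fintype κ] (A : Matrix ι κ ℝ) : ℝ :=
  sSup ((fun x => l2norm (A.mulVec x)) '' {x | l2norm x ≤ 1})

/-- The Strong `(ε,δ)`-JL Moment Property of a random matrix. -/
def StrongJL {Ω : Type*} [MeasureSpace Ω] {ι κ : Type*} [Fintype ι] [Fintype κ]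
    (ε δ : ℝ) (M : Ω → Matrix ι κ ℝ) : Prop :=
  ∀ x : κ → ℝ, sqNorm x = 1 →
    (∫ ω, sqNorm ((M ω).mulVec x)) = 1 ∧
    ∀ p : ℝ, 2 ≤ p → p ≤ Real.log (1 / δ) →
      pmom p (fun ω => sqNorm ((M ω).mulVec x) - 1)
        ≤ ε / Real.exp 1 * Real.sqrt (p / Real.log (1 / δ))

/-- The `(ε,δ,p)`-JL Moment Property of a random matrix. -/
def JLMoment {Ω : Type*} [MeasureSpace Ω] {ι κ : Type*} [Fintype ι] [Fintype κ]
    (ε δ p : ℝ) (M : Ω → Matrix ι κ ℝ) : Prop :=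
  ∀ x : κ → ℝ, sqNorm x = 1 →
    pmom p (fun ω => sqNorm ((M ω).mulVec x) - 1) ≤ ε * δ ^ (1 / p)

/-- `(λ,ε,δ)`-Oblivious Subspace Embedding. -/
def OSE {Ω : Type*} [MeasureSpace Ω] {ι κ : Type*} [Fintype ι] [Fintype κ]
    (lam : ℕ) (ε δ : ℝ) (M : Ω → Matrix ι κ ℝ) : Prop :=
  ∀ V : Submodule ℝ (κ → ℝ), Module.finrank ℝ V = lam →
    ENNReal.ofReal (1 - δ) ≤
      volume {ω | ∀ x ∈ V, |l2norm ((M ω).mulVec x) - l2norm x| ≤ ε * l2norm x}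

/-- The law of a Rademacher random variable: uniform on `{-1, 1}`. -/
def radMeasure : Measure ℝ :=
  (2 : ℝ≥0∞)⁻¹ • Measure.dirac 1 + (2 : ℝ≥0∞)⁻¹ • Measure.dirac (-1)



lemma sqNorm_nonneg' {ι : Type*} [Fintype ι] (x : ι → ℝ) : 0 ≤ sqNorm x :=
  Finset.sum_nonneg fun _ _ => sq_nonneg _

lemma sqNorm_smul' {ι : Type*} [Fintype ι] (a : ℝ) (x : ι → ℝ) :
    sqNorm (a • x) = a ^ 2 * sqNorm x := by
  simp [sqNorm, Finset.mul_sum, mul_pow]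

lemma sqNorm_eq_zero' {ι : Type*} [Fintype ι] {x : ι → ℝ} (h : sqNorm x = 0) : x = 0 := by
  funext i
  have h2 := (Finset.sum_eq_zero_iff_of_nonneg (fun i _ => sq_nonneg (x i))).1 h i
    (Finset.mem_univ i)
  exact pow_eq_zero_iff two_ne_zero |>.1 h2

lemma pmom_zero' {Ω : Type*} [MeasureSpace Ω] {p : ℝ} (hp : 0 < p) :
    pmom p (fun _ : Ω => (0 : ℝ)) = 0 := by
  unfold pmom
  rw [show (fun ω : Ω => |(0:ℝ)| ^ p) = fun _ : Ω => (0:ℝ) from funext fun ω => by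
    rw [abs_zero, Real.zero_rpow hp.ne']]
  rw [integral_zero, Real.zero_rpow (one_div_ne_zero hp.ne')]

lemma pmom_const_mul' {Ω : Type*} [MeasureSpace Ω] {p a : ℝ} (hp : 0 < p) (ha : 0 ≤ a)
    (X : Ω → ℝ) : pmom p (fun ω => a * X ω) = a * pmom p X := by
  unfold pmom
  have h1 : ∀ ω, |a * X ω| ^ p = a ^ p * |X ω| ^ p := fun ω => by
    rw [abs_mul, abs_of_nonneg ha, Real.mul_rpow ha (abs_nonneg _)]
  simp only [h1, integral_const_mul]
  rw [Real.mul_rpow (Real.rpow_nonneg ha p)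
    (integral_nonneg fun ω => Real.rpow_nonneg (abs_nonneg _) p),
    ← Real.rpow_mul ha, mul_one_div_cancel hp.ne', Real.rpow_one]

lemma pmom_eq_toReal_eLpNorm {Ω : Type*} [MeasureSpace Ω] (f : Ω → ℝ) (hf : Measurable f)
    {p : ℝ} (hp : 0 < p) :
    pmom p f = (eLpNorm f (ENNReal.ofReal p) volume).toReal := by
  have hP0 : ENNReal.ofReal p ≠ 0 := by
    simp only [ne_eq, ENNReal.ofReal_eq_zero, not_le]; exact hp
  have hPt : ENNReal.ofReal p ≠ ⊤ := ENNReal.ofReal_ne_top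
  rw [eLpNorm_eq_lintegral_rpow_enorm_toReal hP0 hPt, ENNReal.toReal_ofReal hp.le,
    ← ENNReal.toReal_rpow]
  unfold pmom
  congr 1
  have hmeas : Measurable fun ω => |f ω| ^ p :=
    (Real.continuous_rpow_const hp.le).measurable.comp hf.abs
  rw [integral_eq_lintegral_of_nonneg_ae
    (Filter.Eventually.of_forall fun ω => Real.rpow_nonneg (abs_nonneg _) p)
    hmeas.aestronglyMeasurable]
  congr 1
  refine lintegral_congr fun ω => ?_
  rw [← ofReal_norm, Real.norm_eq_abs,
    ENNReal.ofReal_rpow_of_nonneg (abs_nonneg _) hp.le]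

/-- Main abstract lemma. -/
lemma key_lemma {Ω : Type*} [MeasureSpace Ω] [IsProbabilityMeasure (volume : Measure Ω)]
    (ε δ : ℝ) (hε : 0 < ε)
    (m d : ℕ) (Q : Ω → Matrix (Fin m) (Fin d) ℝ)
    (hQmeas : Measurable Q) (hQ : StrongJL ε δ Q)
    {I : Type*} [Fintype I] (y : I → Fin d → ℝ) (hy : ∑ i, sqNorm (y i) = 1) :
    (∫ ω, ∑ i, sqNorm ((Q ω).mulVec (y i))) = 1 ∧
    ∀ p : ℝ, 2 ≤ p → p ≤ Real.log (1 / δ) →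
      pmom p (fun ω => (∑ i, sqNorm ((Q ω).mulVec (y i))) - 1)
        ≤ ε / Real.exp 1 * Real.sqrt (p / Real.log (1 / δ)) := by
  have hmeas : ∀ v : Fin d → ℝ, Measurable fun ω => sqNorm ((Q ω).mulVec v) := by
    intro v
    simp only [sqNorm, Matrix.mulVec, dotProduct]
    refine Finset.measurable_sum _ fun j _ => ?_
    refine Measurable.pow_const ?_ 2
    refine Finset.measurable_sum _ fun l _ => ?_
    exact ((measurable_pi_apply l).comp ((measurable_pi_apply j).comp hQmeas)).mul_const _
  set c : I → ℝ := fun i => sqNorm (y i) with hc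
  have hcnn : ∀ i, 0 ≤ c i := fun i => sqNorm_nonneg' _
  have hscale : ∀ i, c i ≠ 0 → ∃ u : Fin d → ℝ, sqNorm u = 1 ∧
      ∀ ω, sqNorm ((Q ω).mulVec (y i)) = c i * sqNorm ((Q ω).mulVec u) := by
    intro i hci
    have hcpos : 0 < c i := lt_of_le_of_ne (hcnn i) (Ne.symm hci)
    have hs : (0:ℝ) < Real.sqrt (c i) := Real.sqrt_pos.2 hcpos
    refine ⟨(Real.sqrt (c i))⁻¹ • y i, ?_, ?_⟩
    · rw [sqNorm_smul', inv_pow, Real.sq_sqrt hcpos.le]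
      exact inv_mul_cancel₀ hci
    · intro ω
      rw [Matrix.mulVec_smul, sqNorm_smul', inv_pow, Real.sq_sqrt hcpos.le]
      field_simp
  -- integrability and integrals of the pieces
  have hpieces : ∀ i, Integrable (fun ω => sqNorm ((Q ω).mulVec (y i))) ∧
      (∫ ω, sqNorm ((Q ω).mulVec (y i))) = c i := by
    intro i
    by_cases hci : c i = 0
    · have hy0 : y i = 0 := sqNorm_eq_zero' hci
      have : (fun ω => sqNorm ((Q ω).mulVec (y i))) = fun _ => (0:ℝ) := by
        funext ω; rw [hy0, Matrix.mulVec_zero]; simp [sqNorm]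
      rw [this]
      exact ⟨integrable_const 0, by rw [integral_const]; simp [hci]⟩
    · obtain ⟨u, hu, hgu⟩ := hscale i hci
      have h1 := (hQ u hu).1
      have hInt : Integrable (fun ω => sqNorm ((Q ω).mulVec u)) := by
        by_contra h
        rw [integral_undef h] at h1; norm_num at h1
      constructor
      · rw [show (fun ω => sqNorm ((Q ω).mulVec (y i)))
            = fun ω => c i * sqNorm ((Q ω).mulVec u) from funext hgu]
        exact hInt.const_mul _
      · rw [show (fun ω => sqNorm ((Q ω).mulVec (y i)))
            = fun ω => c i * sqNorm ((Q ω).mulVec u) from funext hgu]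
        rw [integral_const_mul, h1, mul_one]
  constructor
  · rw [integral_finset_sum _ fun i _ => (hpieces i).1]
    rw [Finset.sum_congr rfl fun i _ => (hpieces i).2]
    exact hy
  · intro p hp2 hplog
    have hp0 : (0:ℝ) < p := by linarith
    set B : ℝ := ε / Real.exp 1 * Real.sqrt (p / Real.log (1 / δ)) with hB
    have hBnn : 0 ≤ B :=
      mul_nonneg (div_nonneg hε.le (Real.exp_pos 1).le) (Real.sqrt_nonneg _)
    -- pieces bound
    set F : I → Ω → ℝ := fun i ω => sqNorm ((Q ω).mulVec (y i)) - c i with hF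
    have hFmeas : ∀ i, Measurable (F i) := fun i => (hmeas (y i)).sub measurable_const
    have hpiece : ∀ i, pmom p (F i) ≤ c i * B := by
      intro i
      by_cases hci : c i = 0
      · have hy0 : y i = 0 := sqNorm_eq_zero' hci
        have : F i = fun _ => (0:ℝ) := by
          funext ω; simp only [hF]; rw [hy0, Matrix.mulVec_zero, hci]; simp [sqNorm]
        rw [this, pmom_zero' hp0, hci, zero_mul]
      · obtain ⟨u, hu, hgu⟩ := hscale i hci
        have : F i = fun ω => c i * (sqNorm ((Q ω).mulVec u) - 1) := by
          funext ω
          simp only [hF]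
          rw [hgu ω, mul_sub, mul_one]
        rw [this, pmom_const_mul' hp0 (hcnn i)]
        exact mul_le_mul_of_nonneg_left ((hQ u hu).2 p hp2 hplog) (hcnn i)
    -- assemble
    set P : ℝ≥0∞ := ENNReal.ofReal p with hP
    have hP1 : 1 ≤ P := by
      rw [hP, ← ENNReal.ofReal_one]
      exact ENNReal.ofReal_le_ofReal (by linarith)
    have hP0 : P ≠ 0 := by
      rw [hP]; simp only [ne_eq, ENNReal.ofReal_eq_zero, not_le]; exact hp0
    have hPt : P ≠ ⊤ := ENNReal.ofReal_ne_top
    set f : Ω → ℝ := fun ω => (∑ i, sqNorm ((Q ω).mulVec (y i))) - 1 with hf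
    have hfmeas : Measurable f :=
      (Finset.measurable_sum _ fun i _ => hmeas (y i)).sub measurable_const
    have hsplit : f = ∑ i, F i := by
      funext ω
      simp only [hf, hF, Finset.sum_apply]
      rw [Finset.sum_sub_distrib]
      congr 1
      exact hy.symm
    rw [pmom_eq_toReal_eLpNorm f hfmeas hp0]
    by_cases htop : eLpNorm f P volume = ⊤
    · rw [htop]; simpa using hBnn
    · have hFfin : ∀ i, eLpNorm (F i) P volume ≠ ⊤ := by
        intro i
        have hbd : ∀ ω, ‖F i ω‖ ≤ ‖|f ω| + (1 + c i)‖ := by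
          intro ω
          have h1 : 0 ≤ sqNorm ((Q ω).mulVec (y i)) := sqNorm_nonneg' _
          have h2 : sqNorm ((Q ω).mulVec (y i)) ≤ ∑ j, sqNorm ((Q ω).mulVec (y j)) :=
            Finset.single_le_sum (f := fun j => sqNorm ((Q ω).mulVec (y j)))
              (fun j _ => sqNorm_nonneg' _) (Finset.mem_univ i)
          have h3 : ∑ j, sqNorm ((Q ω).mulVec (y j)) = f ω + 1 := by simp [hf]
          have h4 : f ω ≤ |f ω| := le_abs_self _
          have h5 : 0 ≤ |f ω| := abs_nonneg _
          rw [Real.norm_eq_abs, Real.norm_eq_abs,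
            abs_of_nonneg (by linarith [hcnn i] : (0:ℝ) ≤ |f ω| + (1 + c i)), abs_le]
          constructor
          · simp only [hF]; nlinarith [hcnn i]
          · simp only [hF]; nlinarith [hcnn i]
        have hconst : eLpNorm (fun _ : Ω => (1 + c i)) P volume ≠ ⊤ :=
          (memLp_const (1 + c i)).2.ne
        have habs : eLpNorm (fun ω => |f ω|) P volume = eLpNorm f P volume := by
          rw [show (fun ω => |f ω|) = fun ω => ‖f ω‖ from funext fun ω =>
            (Real.norm_eq_abs (f ω)).symm]
          exact eLpNorm_norm f
        refine ne_top_of_le_ne_top ?_ ((eLpNorm_mono hbd).trans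
          (eLpNorm_add_le hfmeas.abs.aestronglyMeasurable aestronglyMeasurable_const hP1))
        rw [habs]
        exact ENNReal.add_ne_top.2 ⟨htop, hconst⟩
      have hmink : eLpNorm f P volume ≤ ∑ i, eLpNorm (F i) P volume := by
        rw [hsplit]
        exact eLpNorm_sum_le (fun i _ => (hFmeas i).aestronglyMeasurable) hP1
      have hsumfin : (∑ i, eLpNorm (F i) P volume) ≠ ⊤ :=
        (ENNReal.sum_lt_top.2 fun i _ => lt_top_iff_ne_top.2 (hFfin i)).ne
      calc (eLpNorm f P volume).toReal
          ≤ (∑ i, eLpNorm (F i) P volume).toReal := ENNReal.toReal_mono hsumfin hmink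
        _ = ∑ i, (eLpNorm (F i) P volume).toReal :=
            ENNReal.toReal_sum fun i _ => hFfin i
        _ = ∑ i, pmom p (F i) := by
            refine Finset.sum_congr rfl fun i _ => ?_
            rw [pmom_eq_toReal_eLpNorm (F i) (hFmeas i) hp0]
        _ ≤ ∑ i, c i * B := Finset.sum_le_sum fun i _ => hpiece i
        _ = B := by rw [← Finset.sum_mul, hy, one_mul]

example : True := trivial

lemma kron_one_left {m d ℓ : ℕ} (A : Matrix (Fin m) (Fin d) ℝ) (x : Fin ℓ × Fin d → ℝ) :
    sqNorm ((Matrix.kronecker (1 : Matrix (Fin ℓ) (Fin ℓ) ℝ) A).mulVec x)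
      = ∑ i : Fin ℓ, sqNorm (A.mulVec fun l => x (i, l)) := by
  have hentry : ∀ (i : Fin ℓ) (j : Fin m),
      ((Matrix.kronecker (1 : Matrix (Fin ℓ) (Fin ℓ) ℝ) A).mulVec x) (i, j)
        = (A.mulVec fun l => x (i, l)) j := by
    intro i j
    simp only [Matrix.mulVec, dotProduct, Matrix.kroneckerMap_apply,
      Matrix.kronecker_apply, Matrix.one_apply]
    rw [Fintype.sum_prod_type, Finset.sum_comm]
    simp [Matrix.one_apply, ite_mul, Finset.sum_ite_eq]
  rw [sqNorm, Fintype.sum_prod_type]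
  refine Finset.sum_congr rfl fun i _ => ?_
  rw [sqNorm]
  exact Finset.sum_congr rfl fun j _ => by rw [hentry]

lemma kron_one_right {m d ℓ : ℕ} (A : Matrix (Fin m) (Fin d) ℝ) (x : Fin d × Fin ℓ → ℝ) :
    sqNorm ((Matrix.kronecker A (1 : Matrix (Fin ℓ) (Fin ℓ) ℝ)).mulVec x)
      = ∑ i : Fin ℓ, sqNorm (A.mulVec fun l => x (l, i)) := by
  have hentry : ∀ (j : Fin m) (i : Fin ℓ),
      ((Matrix.kronecker A (1 : Matrix (Fin ℓ) (Fin ℓ) ℝ)).mulVec x) (j, i)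
        = (A.mulVec fun l => x (l, i)) j := by
    intro j i
    simp only [Matrix.mulVec, dotProduct, Matrix.kroneckerMap_apply,
      Matrix.kronecker_apply, Matrix.one_apply]
    rw [Fintype.sum_prod_type]
    simp [Matrix.one_apply, mul_ite, Finset.sum_ite_eq, mul_comm]
  rw [sqNorm, Fintype.sum_prod_type, Finset.sum_comm]
  refine Finset.sum_congr rfl fun i _ => ?_
  rw [sqNorm]
  exact Finset.sum_congr rfl fun j _ => by rw [hentry]


/-- tensoring a Strong JL matrix with an identity matrix (on either
side) preserves the Strong JL Moment Property. -/
theorem strongJL_kronecker_identity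
    {Ω : Type*} [MeasureSpace Ω] [IsProbabilityMeasure (volume : Measure Ω)]
    (ε δ : ℝ) (hε : ε ∈ Set.Ioo (0 : ℝ) 1) (hδ : δ ∈ Set.Ioo (0 : ℝ) 1)
    (m d : ℕ) (Q : Ω → Matrix (Fin m) (Fin d) ℝ)
    (hQmeasurableCompat : Measurable Q)
    (hQ : StrongJL ε δ Q)
    (ℓ : ℕ) (hℓ : 1 ≤ ℓ) :
    StrongJL ε δ (fun ω => Matrix.kronecker (1 : Matrix (Fin ℓ) (Fin ℓ) ℝ) (Q ω)) ∧
    StrongJL ε δ (fun ω => Matrix.kronecker (Q ω) (1 : Matrix (Fin ℓ) (Fin ℓ) ℝ)) := by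
  constructor
  · intro x hx
    have hy : ∑ i : Fin ℓ, sqNorm ((fun i l => x (i, l)) i) = 1 := by
      rw [← hx]
      simp only [sqNorm, Fintype.sum_prod_type]
    have h := key_lemma ε δ hε.1 m d Q hQmeasurableCompat hQ (fun i l => x (i, l)) hy
    simpa only [kron_one_left] using h
  · intro x hx
    have hy : ∑ i : Fin ℓ, sqNorm ((fun i l => x (l, i)) i) = 1 := by
      rw [← hx]
      simp only [sqNorm, Fintype.sum_prod_type]
      exact Finset.sum_comm
    have h := key_lemma ε δ hε.1 m d Q hQmeasurableCompat hQ (fun i l => x (l, i)) hy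
    simpa only [kron_one_right] using h
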